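/- (East chain combinatorial lower bound) Any legal East path on {0,1}^M starting from the all-zero configuration and ending in a configuration with a 1 at coordinate M must contain some configuration with at least ⌈log₂(M+1)⌉ coordinates equal to 1, where a legal step flips exactly one coordinate i and requires coordinate i−1 to be 1 when i > 1 (coordinate 1 is always flippable). -/

import Mathlib

namespace East13

def cnt (σ : ℕ → Bool) (p X : ℕ) : ℕ :=
  ((Finset.Ioc p X).filter (fun i => σ i = true)).card

def Legal (h : ℕ → ℕ → Bool) (T : ℕ) : Prop :=
  ∀ j < T, ∃ i, 1 ≤ i ∧ h (j + 1) = Function.update (h j) i (!(h j i)) ∧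
    (i ≠ 1 → h j (i - 1) = true)

def L1Stmt (d : ℕ) : Prop :=
  ∀ (h : ℕ → ℕ → Bool) (T p X c : ℕ), Legal h T →
    (∀ i ∈ Finset.Ioc p X, h 0 i = false) → p + d ≤ c → c ≤ X → h T c = true →
    ∃ u ≤ T, Nat.clog 2 (d + 1) ≤ cnt (h u) p X

lemma cnt_one {σ : ℕ → Bool} {p X c : ℕ} (hpc : p < c) (hcX : c ≤ X)
    (hc : σ c = true) : 1 ≤ cnt σ p X := by
  refine Finset.card_pos.mpr ⟨c, ?_⟩
  simp [Finset.mem_filter, Finset.mem_Ioc, hpc, hcX, hc]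

lemma cnt_mono {σ : ℕ → Bool} {p X X' : ℕ} (hXX' : X ≤ X') :
    cnt σ p X ≤ cnt σ p X' := by
  apply Finset.card_le_card
  intro x hx
  simp only [Finset.mem_filter, Finset.mem_Ioc] at hx ⊢
  exact ⟨⟨hx.1.1, le_trans hx.1.2 hXX'⟩, hx.2⟩

lemma cnt_split {σ : ℕ → Bool} {p m X : ℕ} (hpm : p ≤ m) (hmX : m ≤ X) :
    cnt σ p X = cnt σ p m + cnt σ m X := by
  unfold cnt
  rw [← Finset.Ioc_union_Ioc_eq_Ioc hpm hmX, Finset.filter_union,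
    Finset.card_union_of_disjoint]
  apply Finset.disjoint_filter_filter
  rw [Finset.disjoint_left]
  intro a ha ha'
  simp only [Finset.mem_Ioc] at ha ha'
  omega

/-- the reversal of a legal path is legal. -/
lemma legal_reverse {h : ℕ → ℕ → Bool} {T : ℕ} (hleg : Legal h T) (s : ℕ) (hs : s ≤ T) :
    Legal (fun w => h (T - w)) (T - s) := by
  intro j hj
  obtain ⟨i, hi1, hupd, hfac⟩ := hleg (T - j - 1) (by omega)
  rw [show T - j - 1 + 1 = T - j by omega] at hupd
  refine ⟨i, hi1, ?_, ?_⟩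
  · show h (T - (j + 1)) = Function.update (h (T - j)) i (!(h (T - j) i))
    rw [show T - (j + 1) = T - j - 1 by omega, hupd, Function.update_self,
      Bool.not_not, Function.update_idem, Function.update_eq_self]
  · intro hi
    show h (T - j) (i - 1) = true
    rw [hupd, Function.update_of_ne (by omega : i - 1 ≠ i)]
    exact hfac hi

/-- Isolation lemma: creating a one at `p+e` with everything in `(p, p+e)` cleared
costs `1 + ⌈log₂ e⌉` simultaneous ones in `(p, p+e]`. -/
lemma L2 (e : ℕ) (he : 1 ≤ e) (IH1 : L1Stmt (e - 1))
    (h : ℕ → ℕ → Bool) (T p : ℕ) (hleg : Legal h T)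
    (hempty : ∀ i ∈ Finset.Ioc p (p + e), h 0 i = false)
    (hc : h T (p + e) = true)
    (hiso : ∀ i, p < i → i < p + e → h T i = false) :
    ∃ u ≤ T, 1 + Nat.clog 2 e ≤ cnt (h u) p (p + e) := by
  rcases eq_or_lt_of_le he with he1 | he2
  · -- e = 1 : trivial
    subst he1
    refine ⟨T, le_rfl, ?_⟩
    simpa [Nat.clog_one_right] using cnt_one (c := p + 1) (by omega) le_rfl hc
  -- e ≥ 2
  -- s = first time from which the one at p+e persists to time T
  have hex : ∃ v, ∀ w ∈ Finset.Icc v T, h w (p + e) = true := by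
    refine ⟨T, fun w hw => ?_⟩
    simp only [Finset.mem_Icc] at hw
    rwa [show w = T by omega]
  classical
  set s := Nat.find hex with hs_def
  have hsspec : ∀ w ∈ Finset.Icc s T, h w (p + e) = true := Nat.find_spec hex
  have hsle : s ≤ T := Nat.find_min' hex (by
    intro w hw
    simp only [Finset.mem_Icc] at hw
    rwa [show w = T by omega])
  have hs0 : s ≠ 0 := by
    intro h0'
    have h1 := hsspec 0 (by simp only [Finset.mem_Icc]; omega)
    have h2 := hempty (p + e) (Finset.mem_Ioc.mpr ⟨by omega, le_rfl⟩)
    rw [h1] at h2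
    exact absurd h2 (by simp)
  have hprev : h (s - 1) (p + e) = false := by
    have hmin := Nat.find_min hex (show s - 1 < s by omega)
    push_neg at hmin
    obtain ⟨w, hwmem, hwf⟩ := hmin
    simp only [Finset.mem_Icc] at hwmem
    have hws : w = s - 1 := by
      by_contra hne
      exact hwf (hsspec w (by simp [Finset.mem_Icc]; omega))
    rw [← hws]
    simpa using hwf
  obtain ⟨i, hi1, hupd, hfac⟩ := hleg (s - 1) (by omega)
  rw [show s - 1 + 1 = s by omega] at hupd
  have hsc : h s (p + e) = true := hsspec s (by simp [Finset.mem_Icc, hsle])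
  have hie : i = p + e := by
    by_contra hne
    rw [hupd, Function.update_of_ne (fun hh => hne hh.symm)] at hsc
    rw [hsc] at hprev
    exact absurd hprev (by simp)
  have hfac' : h (s - 1) (p + e - 1) = true := by
    have := hfac (by omega)
    rwa [hie] at this
  have hs1 : h s (p + e - 1) = true := by
    rw [hupd, hie, Function.update_of_ne (by omega : p + e - 1 ≠ p + e)]
    exact hfac'
  -- reversed path from T back to s, region (p, p+e-1]
  obtain ⟨w, hwle, hwcnt⟩ :=
    IH1 (fun w => h (T - w)) (T - s) p (p + e - 1) (p + e - 1)
      (legal_reverse hleg s hsle)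
      (by
        intro i' hi'
        simp only [Finset.mem_Ioc] at hi'
        simpa using hiso i' hi'.1 (by omega))
      (by omega) le_rfl
      (by simpa [show T - (T - s) = s by omega] using hs1)
  rw [show e - 1 + 1 = e by omega] at hwcnt
  refine ⟨T - w, by omega, ?_⟩
  have hTw : s ≤ T - w := by omega
  have hce : h (T - w) (p + e) = true := hsspec (T - w) (by simp [Finset.mem_Icc]; omega)
  -- combine: ones in (p, p+e-1] plus the frozen one at p+e
  have hsum : cnt (h (T - w)) p (p + e) = cnt (h (T - w)) p (p + e - 1) + cnt (h (T - w)) (p + e - 1) (p + e) :=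
    cnt_split (by omega) (by omega)
  have hone : 1 ≤ cnt (h (T - w)) (p + e - 1) (p + e) := cnt_one (by omega) le_rfl hce
  simp only [cnt] at hwcnt hsum hone ⊢
  omega

-- L1 fragment, appended after L2 in namespace East13
/-- Creation lemma: reaching a one at distance `d` beyond `p` inside the window
`(p, X]`, starting from an empty window, costs `⌈log₂(d+1)⌉` simultaneous ones. -/
lemma L1 : ∀ d : ℕ, L1Stmt d := by
  intro d
  induction d using Nat.strong_induction_on with
  | _ d IH =>
  intro h T p X c hleg hempty hdc hcX hc
  rcases Nat.eq_zero_or_pos d with hd0 | hd1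
  · exact ⟨T, le_rfl, by simp [hd0, Nat.clog_one_right]⟩
  by_cases hK1 : Nat.clog 2 (d + 1) ≤ 1
  · exact ⟨T, le_rfl, le_trans hK1 (cnt_one (c := c) (by omega) hcX hc)⟩
  push_neg at hK1
  -- main case: K = n + 1 with n ≥ 1
  obtain ⟨n, hKn⟩ : ∃ n, Nat.clog 2 (d + 1) = n + 1 := ⟨Nat.clog 2 (d + 1) - 1, by omega⟩
  have hn1 : 1 ≤ n := by omega
  have hpow : 2 ^ (n - 1) + 2 ^ (n - 1) = 2 ^ n := by
    have h1 : n - 1 + 1 = n := by omega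
    calc 2 ^ (n - 1) + 2 ^ (n - 1) = 2 ^ (n - 1) * 2 := by ring
    _ = 2 ^ (n - 1 + 1) := (pow_succ 2 (n - 1)).symm
    _ = 2 ^ n := by rw [h1]
  have hppos : 0 < 2 ^ (n - 1) := Nat.pow_pos (by norm_num)
  have h2nd : 2 ^ n ≤ d := by
    have := Nat.pow_pred_clog_lt_self (b := 2) one_lt_two (x := d + 1) (by omega)
    rw [hKn] at this
    simpa using Nat.lt_succ_iff.mp (by simpa using this)
  set B := p + 2 ^ n with hB_def
  set m := p + 2 ^ (n - 1) with hm_def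
  have hmB : m < B := by omega
  have hBc : B ≤ c := by omega
  have hBX : B ≤ X := le_trans hBc hcX
  -- t = first time some site in [B, X] carries a one
  have hexQ : ∃ v, ∃ s ∈ Finset.Icc B X, h v s = true :=
    ⟨T, c, Finset.mem_Icc.mpr ⟨hBc, hcX⟩, hc⟩
  classical
  set t := Nat.find hexQ with ht_def
  obtain ⟨s₀, hs₀mem, hs₀⟩ := Nat.find_spec hexQ
  rw [← ht_def] at hs₀
  have htT : t ≤ T := Nat.find_min' hexQ ⟨c, Finset.mem_Icc.mpr ⟨hBc, hcX⟩, hc⟩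
  have hQnot : ∀ v < t, ¬ ∃ s ∈ Finset.Icc B X, h v s = true := fun v hv => Nat.find_min hexQ hv
  have ht0 : t ≠ 0 := by
    intro ht0'
    rw [ht0'] at hs₀
    have := hempty s₀ (by
      simp only [Finset.mem_Icc] at hs₀mem
      exact Finset.mem_Ioc.mpr ⟨by omega, hs₀mem.2⟩)
    rw [hs₀] at this
    exact absurd this (by simp)
  -- the step t-1 → t creates the one, precisely at site B
  obtain ⟨i, hi1, hupd, hfac⟩ := hleg (t - 1) (by omega)
  rw [show t - 1 + 1 = t by omega] at hupd
  have hprevfalse : ∀ s, B ≤ s → s ≤ X → h (t - 1) s = false := by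
    intro s hs1 hs2
    have := hQnot (t - 1) (by omega)
    push_neg at this
    have h2 := this s (Finset.mem_Icc.mpr ⟨hs1, hs2⟩)
    revert h2
    cases h (t - 1) s <;> simp
  have hs₀i : s₀ = i := by
    by_contra hne
    rw [hupd, Function.update_of_ne hne] at hs₀
    simp only [Finset.mem_Icc] at hs₀mem
    rw [hprevfalse s₀ hs₀mem.1 hs₀mem.2] at hs₀
    exact absurd hs₀ (by simp)
  have hiIcc : B ≤ i ∧ i ≤ X := by
    simp only [Finset.mem_Icc] at hs₀mem
    omega
  have hiB : i = B := by
    by_contra hne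
    have hfi : h (t - 1) (i - 1) = true := hfac (by omega)
    rw [hprevfalse (i - 1) (by omega) (by omega)] at hfi
    exact absurd hfi (by simp)
  have htB : h t B = true := by rw [← hiB, ← hs₀i]; exact hs₀
  have htother : ∀ s, B ≤ s → s ≤ X → s ≠ B → h t s = false := by
    intro s hs1 hs2 hsB
    rw [hupd, Function.update_of_ne (by omega : s ≠ i)]
    exact hprevfalse s hs1 hs2
  -- Sub-call 1: creation of a one at B from boundary m within (m, X]
  have hF2 : Nat.clog 2 (2 ^ (n - 1) + 1) = n := by
    have hle : Nat.clog 2 (2 ^ (n - 1) + 1) ≤ n :=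
      (Nat.clog_le_iff_le_pow one_lt_two).mpr (by omega)
    have hge : n - 1 < Nat.clog 2 (2 ^ (n - 1) + 1) :=
      (Nat.lt_clog_iff_pow_lt one_lt_two).mpr (by omega)
    omega
  obtain ⟨u, hut, hucnt⟩ :=
    IH (2 ^ (n - 1)) (by omega) h t m X B
      (fun j hj => hleg j (by omega))
      (fun i' hi' => hempty i' (by
        simp only [Finset.mem_Ioc] at hi' ⊢
        omega))
      (by omega) hBX htB
  rw [hF2] at hucnt
  -- Case a: already n+1 ones in (p, X]
  by_cases hcase : n + 1 ≤ cnt (h u) p X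
  · exact ⟨u, by omega, by omega⟩
  push_neg at hcase
  -- Case b: (p, m] is empty at time u, all ones sit in (m, B]
  have hsplitc : cnt (h u) p X = cnt (h u) p m + cnt (h u) m X :=
    cnt_split (by omega) (by omega)
  have hpm0 : cnt (h u) p m = 0 := by omega
  have hbelow : ∀ i', p < i' → i' ≤ m → h u i' = false := by
    intro i' h1 h2
    have hemp : (Finset.Ioc p m).filter (fun j => h u j = true) = ∅ :=
      Finset.card_eq_zero.mp hpm0
    by_contra hne
    have : h u i' = true := by revert hne; cases h u i' <;> simp
    have : i' ∈ (Finset.Ioc p m).filter (fun j => h u j = true) :=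
      Finset.mem_filter.mpr ⟨Finset.mem_Ioc.mpr ⟨h1, h2⟩, this⟩
    rw [hemp] at this
    exact absurd this (Finset.notMem_empty _)
  set S := (Finset.Ioc m X).filter (fun j => h u j = true) with hS_def
  have hSne : S.Nonempty := by
    rw [← Finset.card_pos]
    have : cnt (h u) m X = S.card := rfl
    omega
  set ℓ := S.min' hSne with hl_def
  have hlS := S.min'_mem hSne
  have hlmem : m < ℓ ∧ ℓ ≤ X := by
    have := Finset.mem_filter.mp hlS
    exact Finset.mem_Ioc.mp this.1
  have hltrue : h u ℓ = true := (Finset.mem_filter.mp hlS).2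
  have hlB : ℓ ≤ B := by
    by_contra hgt
    push_neg at hgt
    have hfalse : h u ℓ = false := by
      rcases eq_or_lt_of_le hut with heq | hlt
      · exact heq ▸ htother ℓ (by omega) hlmem.2 (by omega)
      · have := hQnot u hlt
        push_neg at this
        have h2 := this ℓ (Finset.mem_Icc.mpr ⟨by omega, hlmem.2⟩)
        revert h2
        cases h u ℓ <;> simp
    rw [hltrue] at hfalse
    exact absurd hfalse (by simp)
  -- Sub-call 2: isolation of the one at ℓ = p + e
  set e := ℓ - p with he_def
  have he1 : 1 ≤ e := by omega
  have hpe : p + e = ℓ := by omega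
  have hL1e : L1Stmt (e - 1) := IH (e - 1) (by omega)
  obtain ⟨u₂, hu₂, hcnt₂⟩ :=
    L2 e he1 hL1e h u p
      (fun j hj => hleg j (by omega))
      (fun i' hi' => hempty i' (by
        simp only [Finset.mem_Ioc] at hi' ⊢
        omega))
      (by rw [hpe]; exact hltrue)
      (by
        intro i' h1 h2
        rcases le_or_gt i' m with hle | hlt
        · exact hbelow i' h1 hle
        · by_contra hne
          have htrue : h u i' = true := by revert hne; cases h u i' <;> simp
          have : i' ∈ S := Finset.mem_filter.mpr
            ⟨Finset.mem_Ioc.mpr ⟨hlt, by omega⟩, htrue⟩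
          have := S.min'_le i' this
          omega)
  -- conclude
  have hcloge : n ≤ Nat.clog 2 e := by
    have := (Nat.lt_clog_iff_pow_lt one_lt_two (x := e) (y := n - 1)).mpr (by omega)
    omega
  refine ⟨u₂, by omega, ?_⟩
  have hmono : cnt (h u₂) p (p + e) ≤ cnt (h u₂) p X := cnt_mono (by omega)
  omega

end East13



/-- East chain combinatorial lower bound (Chung–Diaconis–Graham): any legal
East path in `{0,1}^M` (coordinates `1,…,M`) from the all-zero configuration to
a configuration with a `1` at coordinate `M` contains a configuration with at
least `⌈log₂(M+1)⌉` ones; a legal step flips exactly one coordinate `i ∈ [M]`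
and requires coordinate `i - 1` to equal `1` when `i > 1` (coordinate `1` is
always flippable). -/
theorem stmt13 (M : ℕ) (hM : 1 ≤ M) (k : ℕ) (g : ℕ → ℕ → Bool)
    (h0 : ∀ i, g 0 i = false)
    (hend : g k M = true)
    (hstep : ∀ j < k, ∃ i, 1 ≤ i ∧ i ≤ M ∧
      g (j + 1) = Function.update (g j) i (!(g j i)) ∧
      (i ≠ 1 → g j (i - 1) = true)) :
    ∃ j ≤ k, Nat.clog 2 (M + 1) ≤
      ((Finset.Icc 1 M).filter (fun i => g j i = true)).card := by
  obtain ⟨j, hj, hcnt⟩ := East13.L1 M g k 0 M M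
    (fun j hj => by
      obtain ⟨i, h1, _, h3, h4⟩ := hstep j hj
      exact ⟨i, h1, h3, h4⟩)
    (fun i _ => h0 i) (by omega) le_rfl hend
  refine ⟨j, hj, ?_⟩
  rw [show Finset.Icc 1 M = Finset.Ioc 0 M from Finset.Icc_add_one_left_eq_Ioc 0 M]
  exact hcnt
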